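/- Let p be an odd prime, ξ = exp(2πi/p), q = exp(πi/p), and [m] = (q^m - q^{-m})/(q - q^{-1}) the quantum integer. For an integer f with f ≢ 0 mod p and an integer n with 1 ≤ n ≤ (p-1)/2, the sum S_n(f) = Σ_{k=n}^{p-n-1} (-1)^k [2k+1] ξ^{(k²+k)f/2} C(k+n, k-n) lies in Z[ξ] and is divisible by (ξ-1)^{(p-1)/2 - n} in Z[ξ]. -/

import Mathlib

open Complex Finset Polynomial

lemma aux_zpow_mem {ξ : ℂ} {p : ℕ} (hppos : 0 < p) (hξ0 : ξ ≠ 0) (hξp : ξ ^ p = 1)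
    (m : ℤ) : ξ ^ m ∈ Subring.closure {ξ} := by
  have hpz : (p : ℤ) ≠ 0 := by exact_mod_cast hppos.ne'
  have h0 : (0:ℤ) ≤ m % p := Int.emod_nonneg m hpz
  have key : ξ ^ m = ξ ^ ((m % p).toNat) := by
    conv_lhs => rw [← Int.mul_ediv_add_emod m p]
    rw [zpow_add₀ hξ0, zpow_mul]
    rw [show ξ ^ (p:ℤ) = 1 by rw [zpow_natCast, hξp], one_zpow, one_mul]
    rw [← zpow_natCast, Int.toNat_of_nonneg h0]
  rw [key]
  exact pow_mem (Subring.subset_closure (Set.mem_singleton ξ)) _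

lemma aux_prod_mem {ξ : ℂ} (s : Finset ℂ) (g : ℂ → ℂ)
    (h : ∀ ζ ∈ s, ∃ c ∈ Subring.closure {ξ}, g ζ = (ξ - 1) * c) :
    ∃ c ∈ Subring.closure {ξ}, ∏ ζ ∈ s, g ζ = (ξ - 1) ^ s.card * c := by
  classical
  induction s using Finset.cons_induction with
  | empty => exact ⟨1, one_mem _, by simp⟩
  | cons a s ha ih =>
    obtain ⟨c, hc, hgc⟩ := h a (Finset.mem_cons_self a s)
    obtain ⟨C, hC, hpC⟩ := ih (fun ζ hζ => h ζ (Finset.mem_cons_of_mem hζ))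
    refine ⟨c * C, mul_mem hc hC, ?_⟩
    rw [Finset.prod_cons, hgc, hpC, Finset.card_cons, pow_succ]
    ring

lemma aux_sum_pmul {ξ : ℂ} {P : ℂ} (s : Finset ℕ) (F : ℕ → ℂ)
    (h : ∀ j ∈ s, ∃ e ∈ Subring.closure {ξ}, F j = P * e) :
    ∃ E ∈ Subring.closure {ξ}, ∑ j ∈ s, F j = P * E := by
  classical
  induction s using Finset.cons_induction with
  | empty => exact ⟨0, zero_mem _, by simp⟩
  | cons a s ha ih =>
    obtain ⟨c, hc, hgc⟩ := h a (Finset.mem_cons_self a s)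
    obtain ⟨C, hC, hpC⟩ := ih (fun ζ hζ => h ζ (Finset.mem_cons_of_mem hζ))
    refine ⟨c + C, add_mem hc hC, ?_⟩
    rw [Finset.sum_cons, hgc, hpC]
    ring

lemma aux_p_factor {p : ℕ} (hp : 0 < p) {ξ : ℂ} (hprim : IsPrimitiveRoot ξ p) :
    ∃ c ∈ Subring.closure {ξ}, (p : ℂ) = (ξ - 1) ^ (p - 1) * c := by
  classical
  have h1 : (1 : ℂ) ∈ nthRootsFinset p (1 : ℂ) := Polynomial.one_mem_nthRootsFinset hp
  have hXp : (X : ℂ[X]) ^ p - 1 = ∏ ζ ∈ nthRootsFinset p (1 : ℂ), (X - C ζ) :=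
    X_pow_sub_one_eq_prod hp hprim
  have hXp' : (X - C 1) * ∏ ζ ∈ (nthRootsFinset p (1 : ℂ)).erase 1, (X - C ζ)
      = (X : ℂ[X]) ^ p - 1 := by
    rw [hXp]
    exact Finset.mul_prod_erase _ (fun ζ => (X:ℂ[X]) - C ζ) h1
  have hgeom : (X - C 1) * ∑ i ∈ range p, (X:ℂ[X]) ^ i = (X:ℂ[X]) ^ p - 1 := by
    have := geom_sum_mul (X : ℂ[X]) p
    rw [← this]; ring_nf; rw [Polynomial.C_1]; ring
  have hXne : (X - C 1 : ℂ[X]) ≠ 0 := by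
    intro h
    exact Polynomial.X_sub_C_ne_zero (1:ℂ) h
  have hcancel : ∏ ζ ∈ (nthRootsFinset p (1 : ℂ)).erase 1, (X - C ζ)
      = ∑ i ∈ range p, (X:ℂ[X]) ^ i :=
    mul_left_cancel₀ hXne (by rw [hXp', hgeom])
  have heval : ∏ ζ ∈ (nthRootsFinset p (1 : ℂ)).erase 1, (1 - ζ) = (p : ℂ) := by
    have := congrArg (Polynomial.eval 1) hcancel
    simpa [Polynomial.eval_prod, Polynomial.eval_finset_sum] using this
  have hfac : ∀ ζ ∈ (nthRootsFinset p (1 : ℂ)).erase 1,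
      ∃ c ∈ Subring.closure {ξ}, (1 - ζ) = (ξ - 1) * c := by
    intro ζ hζ
    have hζp : ζ ^ p = 1 := (Polynomial.mem_nthRootsFinset hp 1).mp (Finset.mem_of_mem_erase hζ)
    haveI : NeZero p := ⟨hp.ne'⟩
    obtain ⟨i, hi, rfl⟩ := hprim.eq_pow_of_pow_eq_one hζp
    refine ⟨-(∑ t ∈ range i, ξ ^ t), neg_mem (sum_mem fun t _ =>
      pow_mem (Subring.subset_closure (Set.mem_singleton ξ)) t), ?_⟩
    have := geom_sum_mul ξ i
    linear_combination this
  obtain ⟨c, hc, hpc⟩ := aux_prod_mem _ _ hfac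
  refine ⟨c, hc, ?_⟩
  rw [← heval, hpc, Finset.card_erase_of_mem h1, hprim.card_nthRootsFinset]

lemma aux_Q_eq {ξ q : ℂ} (hq0 : q ≠ 0) (hξ0 : ξ ≠ 0) (hq2 : q ^ 2 = ξ)
    (hqq : q - q⁻¹ ≠ 0) (k : ℕ) :
    (q ^ (2 * k + 1) - q ^ (-(2 * (k : ℤ) + 1))) / (q - q⁻¹)
      = ξ ^ (-(k:ℤ)) * ∑ i ∈ range (2 * k + 1), ξ ^ i := by
  have hne : ξ ^ k * q ≠ 0 := mul_ne_zero (pow_ne_zero _ hξ0) hq0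
  have hvv : (q - q⁻¹) * q = ξ - 1 := by
    field_simp
    linear_combination hq2
  have hgeom : (∑ i ∈ range (2 * k + 1), ξ ^ i) * (ξ - 1) = ξ ^ (2 * k + 1) - 1 :=
    geom_sum_mul ξ (2 * k + 1)
  have step1 : (q ^ (2 * k + 1) - q ^ (-(2 * (k : ℤ) + 1))) * (ξ ^ k * q)
      = ξ ^ (2 * k + 1) - 1 := by
    have h1 : q ^ (2 * k + 1) * (ξ ^ k * q) = ξ ^ (2 * k + 1) := by
      rw [← hq2]; ring
    have h2 : q ^ (-(2 * (k : ℤ) + 1)) * (ξ ^ k * q) = 1 := by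
      rw [show -(2 * (k:ℤ) + 1) = -(((2 * k + 1 : ℕ) : ℤ)) by push_cast; ring,
        zpow_neg, zpow_natCast, ← hq2, show ((q^2) ^ k * q : ℂ) = q ^ (2*k+1) by ring]
      exact inv_mul_cancel₀ (pow_ne_zero _ hq0)
    rw [sub_mul, h1, h2]
  have step2 : (ξ ^ (-(k:ℤ)) * (∑ i ∈ range (2 * k + 1), ξ ^ i) * (q - q⁻¹)) * (ξ ^ k * q)
      = ξ ^ (2 * k + 1) - 1 := by
    calc (ξ ^ (-(k:ℤ)) * (∑ i ∈ range (2 * k + 1), ξ ^ i) * (q - q⁻¹)) * (ξ ^ k * q)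
        = ((ξ ^ k)⁻¹ * ξ ^ k) * ((∑ i ∈ range (2 * k + 1), ξ ^ i) * ((q - q⁻¹) * q)) := by
          rw [zpow_neg, zpow_natCast]; ring
      _ = (∑ i ∈ range (2 * k + 1), ξ ^ i) * (ξ - 1) := by
          rw [inv_mul_cancel₀ (pow_ne_zero _ hξ0), hvv, one_mul]
      _ = ξ ^ (2 * k + 1) - 1 := hgeom
  have hnum : q ^ (2 * k + 1) - q ^ (-(2 * (k : ℤ) + 1))
      = ξ ^ (-(k:ℤ)) * (∑ i ∈ range (2 * k + 1), ξ ^ i) * (q - q⁻¹) :=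
    mul_right_cancel₀ hne (by rw [step1, step2])
  rw [hnum, mul_div_cancel_right₀ _ hqq]

lemma aux_desc (p n m : ℕ) (hnm : n ≤ m) :
    (((2*n).factorial : ZMod p)) * ((m+n).choose (m-n) : ZMod p)
      = ∏ i ∈ range (2*n), ((m : ZMod p) + (n : ZMod p) - (i : ZMod p)) := by
  have h1 : (m+n).choose (m-n) = (m+n).choose (2*n) := by
    rw [show m - n = (m+n) - (2*n) by omega]
    exact Nat.choose_symm (by omega)
  have h2 : (2*n).factorial * ((m+n).choose (2*n)) = ∏ i ∈ range (2*n), (m+n-i) := by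
    rw [← Nat.descFactorial_eq_factorial_mul_choose, Nat.descFactorial_eq_prod_range]
  calc (((2*n).factorial : ZMod p)) * ((m+n).choose (m-n) : ZMod p)
      = ((∏ i ∈ range (2*n), (m+n-i) : ℕ) : ZMod p) := by
        rw [h1]; exact_mod_cast congrArg (fun t : ℕ => (t : ZMod p)) h2
    _ = ∏ i ∈ range (2*n), ((m : ZMod p) + (n : ZMod p) - (i : ZMod p)) := by
        rw [Nat.cast_prod]
        refine Finset.prod_congr rfl fun i hi => ?_
        have hile : i ≤ m + n := by
          have := Finset.mem_range.mp hi; omega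
        push_cast [Nat.cast_sub hile]
        ring

lemma aux_choose_congr (p n k₀ j : ℕ) (hp : p.Prime) (hpk : p = 2*k₀+1)
    (hnk : n ≤ k₀) (hj1 : n ≤ j) (hj2 : j + 1 ≤ k₀) :
    ∃ d : ℤ, ((j+n).choose (j-n) : ℤ) - (((2*k₀-j)+n).choose ((2*k₀-j)-n) : ℤ) = p * d := by
  haveI : Fact p.Prime := ⟨hp⟩
  set j' := 2*k₀ - j with hj'
  have hnj' : n ≤ j' := by omega
  have hfac0 : (((2*n).factorial : ZMod p)) ≠ 0 := by
    rw [Ne, ZMod.natCast_eq_zero_iff]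
    intro hdvd
    have := (Nat.Prime.dvd_factorial hp).mp hdvd
    omega
  have hcast : (j' : ZMod p) = -1 - (j : ZMod p) := by
    have hnat : j' + j + 1 = p := by omega
    have : ((j' + j + 1 : ℕ) : ZMod p) = 0 := by rw [hnat]; exact ZMod.natCast_self p
    push_cast at this
    linear_combination this
  have hprodeq : (∏ i ∈ range (2*n), ((j' : ZMod p) + (n : ZMod p) - (i : ZMod p)))
      = ∏ i ∈ range (2*n), ((j : ZMod p) + (n : ZMod p) - (i : ZMod p)) := by
    have hstep : ∀ i ∈ range (2*n), ((j' : ZMod p) + (n : ZMod p) - (i : ZMod p))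
        = (-1) * (((j : ZMod p) + (n : ZMod p) - ((2*n-1-i : ℕ) : ZMod p))) := by
      intro i hi
      have hi' := Finset.mem_range.mp hi
      have hc : ((2*n-1-i : ℕ) : ZMod p) = (2*(n:ZMod p)) - 1 - (i : ZMod p) := by
        have h1 : (2*n-1-i : ℕ) = 2*n - (1+i) := by omega
        rw [h1, Nat.cast_sub (by omega)]
        push_cast
        ring
      rw [hcast, hc]
      ring
    rw [Finset.prod_congr rfl hstep, Finset.prod_mul_distrib, Finset.prod_const,
      Finset.card_range]
    have hneg : ((-1 : ZMod p)) ^ (2*n) = 1 := by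
      rw [pow_mul]; norm_num
    rw [hneg, one_mul]
    exact Finset.prod_range_reflect (fun i => ((j : ZMod p) + (n : ZMod p) - (i : ZMod p))) (2*n)
  have h1 := aux_desc p n j hj1
  have h2 := aux_desc p n j' hnj'
  have hchoose : (((j+n).choose (j-n) : ℕ) : ZMod p) = (((j'+n).choose (j'-n) : ℕ) : ZMod p) := by
    apply mul_left_cancel₀ hfac0
    rw [h1, h2, hprodeq]
  have hzero : ((((j+n).choose (j-n) : ℤ) - ((j'+n).choose (j'-n) : ℤ) : ℤ) : ZMod p) = 0 := by
    push_cast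
    rw [hchoose]
    ring
  obtain ⟨d, hd⟩ := (ZMod.intCast_zmod_eq_zero_iff_dvd _ p).mp hzero
  exact ⟨d, hd⟩

/-- Divisibility of the sums `S_n(f)` (Lemma 2.4 of Murakami 1998):
`S_n(f) = Σ_{k=n}^{p-n-1} (-1)^k [2k+1] ξ^{(k²+k)f/2} C(k+n,k-n)` lies in `ℤ[ξ]`
and is divisible by `(ξ-1)^{(p-1)/2-n}`. -/
theorem S_n_f_divisibility (p : ℕ) (hp : p.Prime) (hodd : Odd p)
    (ξ q : ℂ) (hξ : ξ = Complex.exp (2 * Real.pi * Complex.I / p))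
    (hq : q = Complex.exp (Real.pi * Complex.I / p))
    (f : ℤ) (hf : ¬ ((p : ℤ) ∣ f)) (n : ℕ) (hn1 : 1 ≤ n) (hn2 : n ≤ (p - 1) / 2) :
    (∑ k ∈ Finset.Icc n (p - n - 1),
        (-1 : ℂ) ^ k * ((q ^ (2 * k + 1) - q ^ (-(2 * (k : ℤ) + 1))) / (q - q⁻¹)) *
          ξ ^ ((((k ^ 2 + k) / 2 : ℕ) : ℤ) * f) * (Nat.choose (k + n) (k - n) : ℂ))
      ∈ Subring.closure {ξ} ∧
    ∃ c ∈ Subring.closure {ξ},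
      (∑ k ∈ Finset.Icc n (p - n - 1),
        (-1 : ℂ) ^ k * ((q ^ (2 * k + 1) - q ^ (-(2 * (k : ℤ) + 1))) / (q - q⁻¹)) *
          ξ ^ ((((k ^ 2 + k) / 2 : ℕ) : ℤ) * f) * (Nat.choose (k + n) (k - n) : ℂ))
        = (ξ - 1) ^ ((p - 1) / 2 - n) * c := by
  have hppos : 0 < p := hp.pos
  obtain ⟨k₀, hk₀⟩ := hodd
  have hpk : p = 2*k₀ + 1 := by omega
  have hnk : n ≤ k₀ := by omega
  have hprim : IsPrimitiveRoot ξ p := by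
    rw [hξ]; exact Complex.isPrimitiveRoot_exp p hppos.ne'
  have hξp : ξ ^ p = 1 := hprim.pow_eq_one
  have hξ1 : ξ ≠ 1 := hprim.ne_one (by omega)
  have hξ0 : ξ ≠ 0 := by
    intro h
    rw [h, zero_pow hppos.ne'] at hξp
    exact zero_ne_one hξp
  have hq0 : q ≠ 0 := by rw [hq]; exact Complex.exp_ne_zero _
  have hq2 : q ^ 2 = ξ := by
    rw [hq, hξ, ← Complex.exp_nat_mul]
    norm_num
    ring_nf
  have hqq : q - q⁻¹ ≠ 0 := by
    intro h
    apply hξ1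
    have hqe : q = q⁻¹ := sub_eq_zero.mp h
    rw [← hq2, pow_two]
    nth_rewrite 2 [hqe]
    exact mul_inv_cancel₀ hq0
  have hqp : q ^ p = -1 := by
    rw [hq, ← Complex.exp_nat_mul,
      show (p:ℂ) * (↑Real.pi * I / ↑p) = ↑Real.pi * I by
        have hpc : (p:ℂ) ≠ 0 := Nat.cast_ne_zero.mpr hppos.ne'
        field_simp]
    exact Complex.exp_pi_mul_I
  have hmemξ : ξ ∈ Subring.closure {ξ} := Subring.subset_closure (Set.mem_singleton ξ)
  have hq2p : q ^ (2*(p:ℤ)) = 1 := by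
    rw [show (2*(p:ℤ)) = ((2*p : ℕ) : ℤ) by push_cast; ring, zpow_natCast, pow_mul, hq2, hξp]
  set F : ℕ → ℂ := fun k =>
    (-1 : ℂ) ^ k * ((q ^ (2 * k + 1) - q ^ (-(2 * (k : ℤ) + 1))) / (q - q⁻¹)) *
      ξ ^ ((((k ^ 2 + k) / 2 : ℕ) : ℤ) * f) * (Nat.choose (k + n) (k - n) : ℂ) with hF
  -- the pair lemma
  have hpair : ∀ j, n ≤ j → j + 1 ≤ k₀ →
      ∃ e ∈ Subring.closure {ξ}, F j + F (2*k₀-j) = (p:ℂ) * e := by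
    intro j hj1 hj2
    simp only [hF]
    have hjle : j ≤ 2*k₀ := by omega
    -- sign
    have hsgn : (-1 : ℂ) ^ (2*k₀-j) = (-1:ℂ) ^ j := by
      have h1 : (-1 : ℂ) ^ (2*k₀-j) * (-1:ℂ)^j = (-1:ℂ)^j * (-1:ℂ)^j := by
        rw [← pow_add, ← pow_add, show 2*k₀-j+j = 2*k₀ by omega, show j + j = 2*j by ring,
          pow_mul, pow_mul]
        norm_num
      exact mul_right_cancel₀ (pow_ne_zero _ (by norm_num)) h1
    -- quantum integer antisymmetry
    have hA : q ^ (2 * (2*k₀-j) + 1) = q ^ (-(2 * (j:ℤ) + 1)) := by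
      rw [← zpow_natCast q (2 * (2*k₀-j) + 1),
        show ((2 * (2*k₀-j) + 1 : ℕ) : ℤ) = 2*(p:ℤ) + (-(2 * (j:ℤ) + 1)) by
          push_cast [Nat.cast_sub hjle]; omega,
        zpow_add₀ hq0, hq2p, one_mul]
    have hB : q ^ (-(2 * ((2*k₀-j : ℕ) : ℤ) + 1)) = q ^ (2 * j + 1) := by
      rw [show (-(2 * ((2*k₀-j : ℕ) : ℤ) + 1)) = (-(2*(p:ℤ))) + ((2 * j + 1 : ℕ) : ℤ) by
          push_cast [Nat.cast_sub hjle]; omega,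
        zpow_add₀ hq0, zpow_neg, hq2p, inv_one, one_mul, zpow_natCast]
    -- ξ-power equality
    have hwnat : ((2*k₀-j)^2 + (2*k₀-j))/2 = (j^2+j)/2 + p * (k₀ - j) := by
      obtain ⟨c, hc⟩ : ∃ c, k₀ = j + c := ⟨k₀ - j, by omega⟩
      have h2k : 2*k₀ - j = j + 2*c := by omega
      rw [h2k, show k₀ - j = c by omega, hpk, hc,
        show (j+2*c)^2 + (j+2*c) = (j^2+j) + 2*((2*(j+c)+1)*c) by ring,
        Nat.add_mul_div_left _ _ (by norm_num : (0:ℕ) < 2)]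
    have hX : ξ ^ (((((2*k₀-j) ^ 2 + (2*k₀-j)) / 2 : ℕ) : ℤ) * f)
        = ξ ^ ((((j ^ 2 + j) / 2 : ℕ) : ℤ) * f) := by
      rw [hwnat,
        show ((((j^2+j)/2 + p * (k₀ - j) : ℕ)) : ℤ) * f
          = (((j^2+j)/2 : ℕ) : ℤ) * f + (p:ℤ) * (((k₀-j : ℕ) : ℤ) * f) by push_cast; ring,
        zpow_add₀ hξ0,
        show ξ ^ ((p:ℤ) * (((k₀-j : ℕ) : ℤ) * f)) = 1 by
          rw [zpow_mul, zpow_natCast, hξp, one_zpow],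
        mul_one]
    -- binomial congruence
    obtain ⟨d, hd⟩ := aux_choose_congr p n k₀ j hp hpk hnk hj1 hj2
    have hcd : ((Nat.choose (j + n) (j - n) : ℂ)) - (Nat.choose ((2*k₀-j) + n) ((2*k₀-j) - n) : ℂ)
        = (p:ℂ) * (d:ℂ) := by
      have := congrArg (fun z : ℤ => (z : ℂ)) hd
      push_cast at this
      convert this using 2 <;> push_cast <;> ring
    refine ⟨(-1:ℂ)^j * ((q ^ (2 * j + 1) - q ^ (-(2 * (j : ℤ) + 1))) / (q - q⁻¹)) *
      ξ ^ ((((j ^ 2 + j) / 2 : ℕ) : ℤ) * f) * (d:ℂ), ?_, ?_⟩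
    · refine mul_mem (mul_mem (mul_mem (pow_mem (neg_mem (one_mem _)) j) ?_) ?_) ?_
      · rw [aux_Q_eq hq0 hξ0 hq2 hqq j]
        exact mul_mem (aux_zpow_mem hppos hξ0 hξp _)
          (sum_mem fun i _ => pow_mem hmemξ i)
      · exact aux_zpow_mem hppos hξ0 hξp _
      · exact intCast_mem _ d
    · rw [hsgn, hA, hB, hX]
      have expand : ∀ (s x c₁ c₂ pd : ℂ), c₁ - c₂ = pd →
          s * x * c₁ + s * (-(x)) * c₂ = s * x * (c₁ - c₂) := by
        intro s x c₁ c₂ pd h; ring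
      calc (-1:ℂ)^j * ((q ^ (2 * j + 1) - q ^ (-(2 * (j : ℤ) + 1))) / (q - q⁻¹)) *
              ξ ^ ((((j ^ 2 + j) / 2 : ℕ) : ℤ) * f) * (Nat.choose (j + n) (j - n) : ℂ)
            + (-1:ℂ)^j * ((q ^ (-(2 * (j:ℤ) + 1)) - q ^ (2 * j + 1)) / (q - q⁻¹)) *
              ξ ^ ((((j ^ 2 + j) / 2 : ℕ) : ℤ) * f) *
              (Nat.choose ((2*k₀-j) + n) ((2*k₀-j) - n) : ℂ)
          = (-1:ℂ)^j * ((q ^ (2 * j + 1) - q ^ (-(2 * (j : ℤ) + 1))) / (q - q⁻¹)) *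
              ξ ^ ((((j ^ 2 + j) / 2 : ℕ) : ℤ) * f) *
              ((Nat.choose (j + n) (j - n) : ℂ) -
                (Nat.choose ((2*k₀-j) + n) ((2*k₀-j) - n) : ℂ)) := by
            ring
        _ = (p:ℂ) * ((-1:ℂ)^j * ((q ^ (2 * j + 1) - q ^ (-(2 * (j : ℤ) + 1))) / (q - q⁻¹)) *
              ξ ^ ((((j ^ 2 + j) / 2 : ℕ) : ℤ) * f) * (d:ℂ)) := by
            rw [hcd]; ring
  have hmid : F k₀ = 0 := by
    have h1 : q ^ (2 * k₀ + 1) = -1 := by rw [show 2*k₀+1 = p by omega, hqp]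
    have h2 : q ^ (-(2 * (k₀:ℤ) + 1)) = -1 := by
      rw [show -(2 * (k₀:ℤ) + 1) = -((p:ℕ):ℤ) by push_cast; omega]
      rw [zpow_neg, zpow_natCast, hqp]
      norm_num
    simp only [hF]
    rw [h1, h2]
    simp
  have key : ∃ E ∈ Subring.closure {ξ},
      (∑ k ∈ Finset.Icc n (p - n - 1), F k) = (p:ℂ) * E := by
    have hsplit : Finset.Icc n (p-n-1) = (Finset.Icc n (k₀-1)) ∪ (Finset.Icc k₀ (p-n-1)) := by
      apply Finset.ext; intro a
      simp only [Finset.mem_Icc, Finset.mem_union]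
      omega
    have hdisj : Disjoint (Finset.Icc n (k₀-1)) (Finset.Icc k₀ (p-n-1)) := by
      simp only [Finset.disjoint_left, Finset.mem_Icc]
      intro a h1 h2
      omega
    have hins : Finset.Icc k₀ (p-n-1) = insert k₀ (Finset.Icc (k₀+1) (p-n-1)) := by
      apply Finset.ext; intro a
      simp only [Finset.mem_Icc, Finset.mem_insert]
      omega
    have hnmem : k₀ ∉ Finset.Icc (k₀+1) (p-n-1) := by
      simp only [Finset.mem_Icc, not_and, not_le]
      intro h
      omega
    have hre : (∑ j ∈ Finset.Icc n (k₀-1), F (2*k₀-j))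
        = ∑ k ∈ Finset.Icc (k₀+1) (p-n-1), F k := by
      refine Finset.sum_nbij' (fun j => 2*k₀-j) (fun k => 2*k₀-k) ?_ ?_ ?_ ?_ ?_
      · intro a ha; simp only [Finset.mem_Icc] at ha ⊢; omega
      · intro a ha; simp only [Finset.mem_Icc] at ha ⊢; omega
      · intro a ha; simp only [Finset.mem_Icc] at ha; show 2*k₀ - (2*k₀ - a) = a; omega
      · intro a ha; simp only [Finset.mem_Icc] at ha; show 2*k₀ - (2*k₀ - a) = a; omega
      · intro a ha; rfl
    have hsum : (∑ k ∈ Finset.Icc n (p - n - 1), F k)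
        = ∑ j ∈ Finset.Icc n (k₀-1), (F j + F (2*k₀-j)) := by
      rw [hsplit, Finset.sum_union hdisj, hins, Finset.sum_insert hnmem, hmid, ← hre,
        Finset.sum_add_distrib]
      ring
    rw [hsum]
    exact aux_sum_pmul _ _ (fun j hj => by
      rw [Finset.mem_Icc] at hj
      exact hpair j hj.1 (by omega))
  obtain ⟨E, hE, hSE⟩ := key
  obtain ⟨c₀, hc₀, hpc₀⟩ := aux_p_factor hppos hprim
  have hemem : (ξ - 1) ∈ Subring.closure {ξ} := sub_mem hmemξ (one_mem _)
  constructor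
  · rw [hSE]
    exact mul_mem (natCast_mem _ p) hE
  · refine ⟨(ξ-1) ^ ((p-1) - ((p-1)/2 - n)) * (c₀ * E),
      mul_mem (pow_mem hemem _) (mul_mem hc₀ hE), ?_⟩
    have hsplitpow : (ξ-1) ^ (p-1)
        = (ξ-1) ^ ((p-1)/2 - n) * (ξ-1) ^ ((p-1) - ((p-1)/2 - n)) := by
      rw [← pow_add]
      congr 1
      omega
    rw [hSE, hpc₀, hsplitpow]
    ring
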